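/- For n ≥ 2, the graph D_n (obtained from n copies of K_4 minus an edge, identified at a single central vertex c, where in the i-th copy c, u_i, w_i, v_i, c is a 4-cycle and u_i v_i is an edge, with w_i of degree 2) satisfies γ_tR(D_n) = 2n+1, and every minimum-weight total Roman dominating function f on D_n has f(w_i) = 0 for all 1 ≤ i ≤ n. -/

import Mathlib

/-- A total Roman dominating function: values in {0,1,2}, every vertex with value 0
has a neighbour with value 2, and vertices with positive value are not isolated in
the induced subgraph of positive-value vertices. -/
def TRDF {V : Type*} (G : SimpleGraph V) (f : V → ℕ) : Prop :=
  (∀ v, f v ≤ 2) ∧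
  (∀ v, f v = 0 → ∃ u, G.Adj v u ∧ f u = 2) ∧
  (∀ v, 0 < f v → ∃ u, G.Adj v u ∧ 0 < f u)

/-- The total Roman domination number. -/
noncomputable def trdn {V : Type*} [Fintype V] (G : SimpleGraph V) : ℕ :=
  sInf {w | ∃ f : V → ℕ, TRDF G f ∧ w = ∑ v, f v}

/-- The graph `G + uv`. -/
def addEdge {V : Type*} (G : SimpleGraph V) (u v : V) : SimpleGraph V :=
  G ⊔ SimpleGraph.fromEdgeSet {s(u, v)}

/-- `G` has no isolated vertices. -/
def NoIsolated {V : Type*} (G : SimpleGraph V) : Prop := ∀ v, ∃ u, G.Adj v u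

/-- The graph D_n: central vertex ; for each i, vertices
u_i = some (i, 0), v_i = some (i, 1), w_i = some (i, 2); in each copy
u_i, v_i, w_i form a triangle and c is adjacent to u_i and v_i but not w_i. -/
def Dgraph (n : ℕ) : SimpleGraph (Option (Fin n × Fin 3)) where
  Adj a b :=
    match a, b with
    | none, none => False
    | none, some (_, j) => j ≠ 2
    | some (_, j), none => j ≠ 2
    | some (i, j), some (i', j') => i = i' ∧ j ≠ j'
  symm := by
    constructor
    rintro (_ | ⟨i, j⟩) (_ | ⟨i', j'⟩) h <;> simp_all
    exact fun e => h.2 e.symm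
  loopless := by
    constructor
    rintro (_ | ⟨i, j⟩) h <;> simp_all


section Aux
variable {n : ℕ}

lemma sum_Dgraph (f : Option (Fin n × Fin 3) → ℕ) :
    ∑ x, f x = f none +
      ∑ i : Fin n, (f (some (i,0)) + f (some (i,1)) + f (some (i,2))) := by
  rw [Fintype.sum_option, Fintype.sum_prod_type]
  congr 1
  refine Finset.sum_congr rfl fun i _ => ?_
  rw [Fin.sum_univ_three]

lemma dFacts (f : Option (Fin n × Fin 3) → ℕ) (hf : TRDF (Dgraph n) f) (i : Fin n) :
    (f (some (i,2)) = 0 → f (some (i,0)) = 2 ∨ f (some (i,1)) = 2) ∧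
    (0 < f (some (i,2)) → 0 < f (some (i,0)) ∨ 0 < f (some (i,1))) ∧
    (f (some (i,0)) = 0 → f none = 2 ∨ f (some (i,1)) = 2 ∨ f (some (i,2)) = 2) ∧
    (f (some (i,1)) = 0 → f none = 2 ∨ f (some (i,0)) = 2 ∨ f (some (i,2)) = 2) ∧
    (0 < f (some (i,0)) → 0 < f none ∨ 0 < f (some (i,1)) ∨ 0 < f (some (i,2))) ∧
    (0 < f (some (i,1)) → 0 < f none ∨ 0 < f (some (i,0)) ∨ 0 < f (some (i,2))) := by
  obtain ⟨hle, h0, hpos⟩ := hf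
  refine ⟨?_, ?_, ?_, ?_, ?_, ?_⟩
  · intro h
    obtain ⟨u, hadj, hu⟩ := h0 _ h
    rcases u with _ | ⟨i', j'⟩
    · exact absurd rfl hadj
    · obtain ⟨rfl, hj⟩ := (hadj : i = i' ∧ (2:Fin 3) ≠ j')
      fin_cases j'
      · exact Or.inl hu
      · exact Or.inr hu
      · exact absurd rfl hj
  · intro h
    obtain ⟨u, hadj, hu⟩ := hpos _ h
    rcases u with _ | ⟨i', j'⟩
    · exact absurd rfl hadj
    · obtain ⟨rfl, hj⟩ := (hadj : i = i' ∧ (2:Fin 3) ≠ j')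
      fin_cases j'
      · exact Or.inl hu
      · exact Or.inr hu
      · exact absurd rfl hj
  · intro h
    obtain ⟨u, hadj, hu⟩ := h0 _ h
    rcases u with _ | ⟨i', j'⟩
    · exact Or.inl hu
    · obtain ⟨rfl, hj⟩ := (hadj : i = i' ∧ (0:Fin 3) ≠ j')
      fin_cases j'
      · exact absurd rfl hj
      · exact Or.inr (Or.inl hu)
      · exact Or.inr (Or.inr hu)
  · intro h
    obtain ⟨u, hadj, hu⟩ := h0 _ h
    rcases u with _ | ⟨i', j'⟩
    · exact Or.inl hu
    · obtain ⟨rfl, hj⟩ := (hadj : i = i' ∧ (1:Fin 3) ≠ j')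
      fin_cases j'
      · exact Or.inr (Or.inl hu)
      · exact absurd rfl hj
      · exact Or.inr (Or.inr hu)
  · intro h
    obtain ⟨u, hadj, hu⟩ := hpos _ h
    rcases u with _ | ⟨i', j'⟩
    · exact Or.inl hu
    · obtain ⟨rfl, hj⟩ := (hadj : i = i' ∧ (0:Fin 3) ≠ j')
      fin_cases j'
      · exact absurd rfl hj
      · exact Or.inr (Or.inl hu)
      · exact Or.inr (Or.inr hu)
  · intro h
    obtain ⟨u, hadj, hu⟩ := hpos _ h
    rcases u with _ | ⟨i', j'⟩
    · exact Or.inl hu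
    · obtain ⟨rfl, hj⟩ := (hadj : i = i' ∧ (1:Fin 3) ≠ j')
      fin_cases j'
      · exact Or.inr (Or.inl hu)
      · exact absurd rfl hj
      · exact Or.inr (Or.inr hu)

lemma copy2 (f : Option (Fin n × Fin 3) → ℕ) (hf : TRDF (Dgraph n) f) (i : Fin n) :
    2 ≤ f (some (i,0)) + f (some (i,1)) + f (some (i,2)) := by
  have h := dFacts f hf i
  omega

lemma copy3 (f : Option (Fin n × Fin 3) → ℕ) (hf : TRDF (Dgraph n) f) (i : Fin n)
    (hc : f none = 0) :
    3 ≤ f (some (i,0)) + f (some (i,1)) + f (some (i,2)) := by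
  have h := dFacts f hf i
  have h1 := hf.1 (some (i,0))
  have h2 := hf.1 (some (i,1))
  have h3 := hf.1 (some (i,2))
  omega

lemma dead (f : Option (Fin n × Fin 3) → ℕ) (hf : TRDF (Dgraph n) f) (i : Fin n)
    (hc : f none = 1)
    (hsum : f (some (i,0)) + f (some (i,1)) + f (some (i,2)) = 2) :
    f (some (i,2)) = 0 := by
  have h := dFacts f hf i
  have h1 := hf.1 (some (i,0))
  have h2 := hf.1 (some (i,1))
  have h3 := hf.1 (some (i,2))
  omega

end Aux


lemma all_eq {n : ℕ} (g : Fin n → ℕ) (h2 : ∀ j, 2 ≤ g j) (hsum : ∑ j, g j = 2*n) (i : Fin n) :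
    g i = 2 := by
  have hsplit := Finset.add_sum_erase Finset.univ g (Finset.mem_univ i)
  have h2' : (Finset.univ.erase i).card • 2 ≤ ∑ j ∈ Finset.univ.erase i, g j :=
    Finset.card_nsmul_le_sum _ _ _ (fun j _ => h2 j)
  have hcard : (Finset.univ.erase i).card = n - 1 := by
    simp [Finset.card_erase_of_mem]
  rw [hcard, smul_eq_mul] at h2'
  have hgi := h2 i
  omega

theorem stmt19 (n : ℕ) (hn : 2 ≤ n) :
    trdn (Dgraph n) = 2 * n + 1 ∧
    ∀ f : Option (Fin n × Fin 3) → ℕ, TRDF (Dgraph n) f →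
      (∑ x, f x) = trdn (Dgraph n) → ∀ i : Fin n, f (some (i, 2)) = 0 := by
  have hnpos : 0 < n := by omega
  set fmin : Option (Fin n × Fin 3) → ℕ := fun x =>
    match x with
    | none => 1
    | some (_, j) => if j = 0 then 2 else 0 with hfmin
  have hTRDF : TRDF (Dgraph n) fmin := by
    refine ⟨?_, ?_, ?_⟩
    · rintro (_ | ⟨i, j⟩) <;> simp [hfmin]
      split <;> omega
    · rintro (_ | ⟨i, j⟩) h
      · simp [hfmin] at h
      · refine ⟨some (i, 0), ⟨rfl, ?_⟩, by simp [hfmin]⟩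
        intro hj
        simp [hfmin, ← hj] at h
    · rintro (_ | ⟨i, j⟩) h
      · exact ⟨some (⟨0, hnpos⟩, 0), by show (0:Fin 3) ≠ 2; decide, by simp [hfmin]⟩
      · refine ⟨none, ?_, by simp [hfmin]⟩
        show j ≠ 2
        intro hj
        simp [hfmin, hj] at h
  have hsumf : ∑ x, fmin x = 2 * n + 1 := by
    rw [sum_Dgraph]
    simp [hfmin, Finset.sum_const]
    omega
  have hmem : 2 * n + 1 ∈ {w | ∃ f : Option (Fin n × Fin 3) → ℕ,
      TRDF (Dgraph n) f ∧ w = ∑ v, f v} := ⟨fmin, hTRDF, hsumf.symm⟩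
  have hlb : ∀ m ∈ {w | ∃ f : Option (Fin n × Fin 3) → ℕ,
      TRDF (Dgraph n) f ∧ w = ∑ v, f v}, 2 * n + 1 ≤ m := by
    rintro m ⟨f, hf, rfl⟩
    rw [sum_Dgraph]
    rcases Nat.eq_zero_or_pos (f none) with hc | hc
    · have h3 := Finset.card_nsmul_le_sum Finset.univ
        (fun j => f (some (j,0)) + f (some (j,1)) + f (some (j,2))) 3
        (fun j _ => copy3 f hf j hc)
      simp only [Finset.card_univ, Fintype.card_fin, smul_eq_mul] at h3
      omega
    · have h2 := Finset.card_nsmul_le_sum Finset.univ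
        (fun j => f (some (j,0)) + f (some (j,1)) + f (some (j,2))) 2
        (fun j _ => copy2 f hf j)
      simp only [Finset.card_univ, Fintype.card_fin, smul_eq_mul] at h2
      omega
  have htrdn : trdn (Dgraph n) = 2 * n + 1 :=
    le_antisymm (Nat.sInf_le hmem) (hlb _ (Nat.sInf_mem ⟨_, hmem⟩))
  refine ⟨htrdn, ?_⟩
  intro f hf hsum i
  rw [htrdn, sum_Dgraph] at hsum
  have hc1 : f none = 1 ∧
      ∑ j : Fin n, (f (some (j,0)) + f (some (j,1)) + f (some (j,2))) = 2 * n := by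
    rcases Nat.eq_zero_or_pos (f none) with hc | hc
    · have h3 := Finset.card_nsmul_le_sum Finset.univ
        (fun j => f (some (j,0)) + f (some (j,1)) + f (some (j,2))) 3
        (fun j _ => copy3 f hf j hc)
      simp only [Finset.card_univ, Fintype.card_fin, smul_eq_mul] at h3
      omega
    · have h2 := Finset.card_nsmul_le_sum Finset.univ
        (fun j => f (some (j,0)) + f (some (j,1)) + f (some (j,2))) 2
        (fun j _ => copy2 f hf j)
      simp only [Finset.card_univ, Fintype.card_fin, smul_eq_mul] at h2
      omega
  have hgi := all_eq (fun j => f (some (j,0)) + f (some (j,1)) + f (some (j,2)))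
    (fun j => copy2 f hf j) hc1.2 i
  exact dead f hf i hc1.1 hgi
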